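/- For any real numbers r₁,…,r_k, consider the k×k real symmetric matrix M with entries M_{ij} = 2·(cosh rᵢ + cosh r_j − cosh(rᵢ − r_j) − 1)/(1 + cosh(rᵢ − r_j)). Then M is positive semidefinite; moreover, M is positive definite if and only if the rᵢ are pairwise distinct and all nonzero. (Equivalently, M_{ij} = 4·sinh(rᵢ/2)·sinh(r_j/2)/cosh((rᵢ − r_j)/2), and det M = 2^k·(∏ᵢ(e^{rᵢ} − 1))²·det(1/(e^{rᵢ} + e^{r_j}))_{i,j} ≥ 0.) -/

import Mathlib

open Real Matrix

/-- For any real numbers `r₁, …, r_k`, the `k × k` matrix with entries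
`M_{ij} = 2(cosh rᵢ + cosh r_j − cosh(rᵢ − r_j) − 1)/(1 + cosh(rᵢ − r_j))` is positive
semidefinite, and it is positive definite if and only if the `rᵢ` are pairwise distinct
and all nonzero. -/
theorem hyperbolic_pairing_posSemidef {k : ℕ} (r : Fin k → ℝ)
    (M : Matrix (Fin k) (Fin k) ℝ)
    (hM : ∀ i j, M i j =
      2 * (Real.cosh (r i) + Real.cosh (r j) - Real.cosh (r i - r j) - 1) /
        (1 + Real.cosh (r i - r j))) :
    M.PosSemidef ∧ (M.PosDef ↔ Function.Injective r ∧ ∀ i, r i ≠ 0) := by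
  classical
  -- the Cayley-type substitution `u i = (1 - e^{r i})/(1 + e^{r i}) ∈ (-1,1)`
  set u : Fin k → ℝ := fun i => (1 - Real.exp (r i)) / (1 + Real.exp (r i)) with hu_def
  have hexp : ∀ i, (0:ℝ) < Real.exp (r i) := fun i => Real.exp_pos _
  have hden : ∀ i, (0:ℝ) < 1 + Real.exp (r i) := fun i => by nlinarith [hexp i]
  have habs : ∀ i, |u i| < 1 := by
    intro i
    rw [hu_def]
    rw [abs_div, abs_of_pos (hden i), div_lt_one (hden i), abs_lt]
    constructor <;> nlinarith [hexp i]
  have habs2 : ∀ i j, |u i * u j| < 1 := by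
    intro i j
    rw [abs_mul]
    nlinarith [habs i, habs j, abs_nonneg (u i), abs_nonneg (u j)]
  have hpos2 : ∀ i j, (0:ℝ) < 1 - u i * u j := fun i j =>
    sub_pos.mpr (lt_of_le_of_lt (le_abs_self _) (habs2 i j))
  -- entries of `M` in terms of `u`
  have hM4 : ∀ i j, M i j = 4 * u i * u j / (1 - u i * u j) := by
    intro i j
    rw [hM i j]
    have h1 : (0:ℝ) < 1 + Real.cosh (r i - r j) := by nlinarith [Real.cosh_pos (r i - r j)]
    rw [div_eq_div_iff (ne_of_gt h1) (ne_of_gt (hpos2 i j))]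
    have hci : Real.cosh (r i) = (Real.exp (r i) + (Real.exp (r i))⁻¹) / 2 := by
      rw [Real.cosh_eq, Real.exp_neg]
    have hcj : Real.cosh (r j) = (Real.exp (r j) + (Real.exp (r j))⁻¹) / 2 := by
      rw [Real.cosh_eq, Real.exp_neg]
    have hcij : Real.cosh (r i - r j)
        = (Real.exp (r i) / Real.exp (r j) + Real.exp (r j) / Real.exp (r i)) / 2 := by
      rw [Real.cosh_eq, Real.exp_neg, Real.exp_sub, inv_div]
    rw [hci, hcj, hcij, hu_def]
    field_simp
    ring
  -- series expansion of each (weighted) entry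
  have hsummable : ∀ (x : Fin k → ℝ) (i j : Fin k),
      Summable (fun n : ℕ => 4 * (x i * u i) * (x j * u j) * (u i * u j) ^ n) := by
    intro x i j
    exact (summable_geometric_of_norm_lt_one (K := ℝ) (x := u i * u j) (by rw [Real.norm_eq_abs]; exact habs2 i j)).mul_left _
  have hentry : ∀ (x : Fin k → ℝ) (i j : Fin k),
      x i * M i j * x j = ∑' n : ℕ, 4 * (x i * u i) * (x j * u j) * (u i * u j) ^ n := by
    intro x i j
    rw [tsum_mul_left, tsum_geometric_of_norm_lt_one (by rw [Real.norm_eq_abs]; exact habs2 i j),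
      hM4 i j, div_eq_mul_inv]
    ring
  have hterm : ∀ (x : Fin k → ℝ) (n : ℕ),
      (∑ i, ∑ j, 4 * (x i * u i) * (x j * u j) * (u i * u j) ^ n)
        = 4 * (∑ i, x i * u i ^ (n + 1)) ^ 2 := by
    intro x n
    rw [sq, Finset.sum_mul_sum, Finset.mul_sum]
    refine Finset.sum_congr rfl fun i _ => ?_
    rw [Finset.mul_sum]
    refine Finset.sum_congr rfl fun j _ => ?_
    rw [mul_pow, pow_succ, pow_succ]
    ring
  have hsum : ∀ x : Fin k → ℝ, Summable (fun n : ℕ => 4 * (∑ i, x i * u i ^ (n + 1)) ^ 2) := by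
    intro x
    have : (fun n : ℕ => 4 * (∑ i, x i * u i ^ (n + 1)) ^ 2)
        = fun n : ℕ => ∑ i, ∑ j, 4 * (x i * u i) * (x j * u j) * (u i * u j) ^ n := by
      funext n; rw [hterm x n]
    rw [this]
    exact summable_sum fun i _ => summable_sum fun j _ => hsummable x i j
  -- quadratic form
  have hquad : ∀ x : Fin k → ℝ,
      dotProduct (star x) (M *ᵥ x) = ∑ i, ∑ j, x i * M i j * x j := by
    intro x
    simp [dotProduct, Matrix.mulVec, Finset.mul_sum, mul_assoc]
  have hkey : ∀ x : Fin k → ℝ,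
      dotProduct (star x) (M *ᵥ x) = ∑' n : ℕ, 4 * (∑ i, x i * u i ^ (n + 1)) ^ 2 := by
    intro x
    rw [hquad x]
    calc ∑ i, ∑ j, x i * M i j * x j
        = ∑ i, ∑ j, ∑' n : ℕ, 4 * (x i * u i) * (x j * u j) * (u i * u j) ^ n := by
          exact Finset.sum_congr rfl fun i _ => Finset.sum_congr rfl fun j _ => hentry x i j
      _ = ∑ i, ∑' n : ℕ, ∑ j, 4 * (x i * u i) * (x j * u j) * (u i * u j) ^ n :=
          Finset.sum_congr rfl fun i _ => (Summable.tsum_finsetSum fun j _ => hsummable x i j).symm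
      _ = ∑' n : ℕ, ∑ i, ∑ j, 4 * (x i * u i) * (x j * u j) * (u i * u j) ^ n :=
          (Summable.tsum_finsetSum fun i _ => summable_sum fun j _ => hsummable x i j).symm
      _ = ∑' n : ℕ, 4 * (∑ i, x i * u i ^ (n + 1)) ^ 2 := tsum_congr fun n => hterm x n
  -- hermitian
  have hherm : M.IsHermitian := by
    ext i j
    simp only [Matrix.conjTranspose_apply, star_trivial]
    rw [hM4 i j, hM4 j i]
    ring
  have hPSD : M.PosSemidef := by
    refine Matrix.PosSemidef.of_dotProduct_mulVec_nonneg hherm fun x => ?_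
    rw [hkey x]
    exact tsum_nonneg fun n => by positivity
  refine ⟨hPSD, ?_, ?_⟩
  · -- PosDef → injective and nonzero
    intro hPD
    constructor
    · intro i j hij
      by_contra hne
      have hv : (Pi.single i 1 - Pi.single j 1 : Fin k → ℝ) ≠ 0 := by
        intro h0
        have := congrFun h0 i
        simp [Pi.single_apply, hne] at this
      have hcol : ∀ a, M a i = M a j := by
        intro a; rw [hM a i, hM a j, hij]
      have hMv : M *ᵥ (Pi.single i 1 - Pi.single j 1 : Fin k → ℝ) = 0 := by
        funext a
        rw [Matrix.mulVec_sub]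
        simp [Matrix.mulVec_single, hcol a]
      have := hPD.dotProduct_mulVec_pos hv
      rw [hMv] at this
      simp at this
    · intro i hri
      have hv : (Pi.single i 1 : Fin k → ℝ) ≠ 0 := by
        intro h0
        have := congrFun h0 i
        simp [Pi.single_apply] at this
      have hui : u i = 0 := by
        rw [hu_def]
        simp [hri, Real.exp_zero]
      have := hPD.dotProduct_mulVec_pos hv
      rw [hkey] at this
      have hzero : (∑' n : ℕ, 4 * (∑ a, (Pi.single i 1 : Fin k → ℝ) a * u a ^ (n + 1)) ^ 2)
          = 0 := by
        have hz : ∀ n : ℕ,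
            4 * (∑ a, (Pi.single i 1 : Fin k → ℝ) a * u a ^ (n + 1)) ^ 2 = 0 := by
          intro n
          have : (∑ a, (Pi.single i 1 : Fin k → ℝ) a * u a ^ (n + 1)) = u i ^ (n + 1) := by
            simp [Pi.single_apply, Finset.sum_ite_eq']
          rw [this, hui]
          simp
        calc (∑' n : ℕ, 4 * (∑ a, (Pi.single i 1 : Fin k → ℝ) a * u a ^ (n + 1)) ^ 2)
            = ∑' _ : ℕ, (0:ℝ) := tsum_congr hz
          _ = 0 := tsum_zero
      rw [hzero] at this
      exact lt_irrefl 0 this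
  · -- injective and nonzero → PosDef
    rintro ⟨hinj, hne0⟩
    have huinj : Function.Injective u := by
      intro i j hij
      apply hinj
      rw [hu_def] at hij
      simp only at hij
      rw [div_eq_div_iff (ne_of_gt (hden i)) (ne_of_gt (hden j))] at hij
      have : Real.exp (r i) = Real.exp (r j) := by nlinarith
      exact Real.exp_injective this
    have hune : ∀ i, u i ≠ 0 := by
      intro i h0
      apply hne0 i
      rw [hu_def] at h0
      simp only [div_eq_zero_iff] at h0
      rcases h0 with h0 | h0
      · have : Real.exp (r i) = 1 := by linarith
        simpa [Real.exp_eq_one_iff] using this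
      · exact absurd h0 (ne_of_gt (hden i))
    refine Matrix.PosDef.of_dotProduct_mulVec_pos hherm fun x hx => ?_
    rw [hkey x]
    obtain ⟨m, hm⟩ : ∃ m : ℕ, (∑ i, x i * u i ^ (m + 1)) ≠ 0 := by
      by_contra h
      push_neg at h
      have hdet : ((Matrix.vandermonde u)ᵀ).det ≠ 0 := by
        rw [Matrix.det_transpose]
        exact Matrix.det_vandermonde_ne_zero_iff.mpr huinj
      have hmv : (Matrix.vandermonde u)ᵀ *ᵥ (fun i => x i * u i) = 0 := by
        funext n
        have h2 := h n
        simp only [Matrix.mulVec, dotProduct, Matrix.transpose_apply, Matrix.vandermonde_apply,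
          Pi.zero_apply]
        rw [← h2]
        refine Finset.sum_congr rfl fun i _ => ?_
        rw [pow_succ]
        ring
      have hd0 := Matrix.eq_zero_of_mulVec_eq_zero hdet hmv
      apply hx
      funext i
      have h3 := congrFun hd0 i
      simp only [Pi.zero_apply] at h3 ⊢
      rcases mul_eq_zero.mp h3 with h4 | h4
      · exact h4
      · exact absurd h4 (hune i)
    have h1 : (0:ℝ) < 4 * (∑ i, x i * u i ^ (m + 1)) ^ 2 := by positivity
    calc (0:ℝ) < 4 * (∑ i, x i * u i ^ (m + 1)) ^ 2 := h1
      _ ≤ ∑' n : ℕ, 4 * (∑ i, x i * u i ^ (n + 1)) ^ 2 :=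
          Summable.le_tsum (hsum x) m fun n _ => by positivity
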